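/- Let ε > 0, let δ ∈ (0,1), let Δ be a positive integer, set a = ε/Δ, and let m be an integer satisfying m ≥ Δ and m ≥ Δ + (1/a)·ln(1/((e^a + 1)·δ)). Let L be the discrete Laplace distribution on ℤ with scale a and center m. Then the probability that the noise falls below the sensitivity is at most δ: Pr_{η ~ L}[η < Δ] ≤ δ. -/

import Mathlib

/-- With the stated choice of center `m`, the probability that a discrete
Laplace noise variable falls below the sensitivity `Δ` is at most `δ`. -/
theorem discreteLaplace_below_sensitivity
    (ε δ : ℝ) (hε : 0 < ε) (hδ0 : 0 < δ) (hδ1 : δ < 1)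
    (Δ : ℤ) (hΔ : 0 < Δ) (a : ℝ) (ha : a = ε / (Δ : ℝ)) (m : ℤ)
    (hm2 : m ≥ Δ)
    (hm1 : (m : ℝ) ≥ (Δ : ℝ) + (1 / a) * Real.log (1 / ((Real.exp a + 1) * δ)))
    (L : PMF ℤ)
    (hL : ∀ x : ℤ, L x =
      ENNReal.ofReal ((Real.exp a - 1) / (Real.exp a + 1) *
        Real.exp (-a * |(x : ℝ) - (m : ℝ)|))) :
    L.toOuterMeasure {η : ℤ | η < Δ} ≤ ENNReal.ofReal δ := by
  have ha0 : 0 < a := by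
    rw [ha]; exact div_pos hε (by exact_mod_cast hΔ)
  have hea : 1 < Real.exp a := by
    have := Real.exp_lt_exp.2 ha0
    simpa using this
  set p : ℝ := (Real.exp a - 1) / (Real.exp a + 1) with hp
  have hp0 : 0 < p := div_pos (by linarith) (by linarith)
  set r : ℝ := Real.exp (-a) with hr
  have hr0 : 0 < r := Real.exp_pos _
  have hr1 : r < 1 := by
    rw [hr, Real.exp_lt_one_iff]; linarith
  set c : ℝ := p * Real.exp (-a * ((m : ℝ) - (Δ : ℝ) + 1)) with hc
  have hc0 : 0 < c := mul_pos hp0 (Real.exp_pos _)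
  -- the bijection ℕ ≃ {η : ℤ // η < Δ}
  let e : ℕ ≃ {η : ℤ // η ∈ {η : ℤ | η < Δ}} :=
    { toFun := fun k => ⟨Δ - 1 - k, by simp only [Set.mem_setOf_eq]; omega⟩
      invFun := fun x => (Δ - 1 - x.1).toNat
      left_inv := fun k => by change (Δ - 1 - (Δ - 1 - (k:ℤ))).toNat = k; omega
      right_inv := fun x => by
        have := x.2
        simp only [Set.mem_setOf_eq] at this
        ext
        simp
        omega }
  have key : ∀ k : ℕ, (L (Δ - 1 - (k : ℤ))) = ENNReal.ofReal (c * r ^ k) := by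
    intro k
    rw [hL]
    congr 1
    have habs : |((Δ - 1 - (k : ℤ) : ℤ) : ℝ) - (m : ℝ)| = (m : ℝ) - (Δ : ℝ) + 1 + k := by
      rw [abs_of_nonpos]
      · push_cast; ring
      · push_cast
        have : (Δ : ℝ) ≤ (m : ℝ) := by exact_mod_cast hm2
        linarith [Nat.cast_nonneg (α := ℝ) k]
    rw [habs, hc, hr]
    rw [← Real.exp_nat_mul]
    rw [mul_assoc, ← Real.exp_add]
    congr 1
    ring
  have hsum : Summable (fun k : ℕ => c * r ^ k) :=
    (summable_geometric_of_lt_one hr0.le hr1).mul_left c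
  have htsum : ∑' k : ℕ, c * r ^ k = c / (1 - r) := by
    rw [tsum_mul_left, tsum_geometric_of_lt_one hr0.le hr1]
    ring
  -- compute the measure
  rw [PMF.toOuterMeasure_apply]
  have : ∑' x : ℤ, Set.indicator {η : ℤ | η < Δ} (⇑L) x
      = ∑' k : ℕ, ENNReal.ofReal (c * r ^ k) := by
    rw [← tsum_subtype]
    rw [← e.tsum_eq]
    exact tsum_congr fun k => key k
  rw [this]
  rw [← ENNReal.ofReal_tsum_of_nonneg (fun k => by positivity) hsum]
  rw [htsum]
  apply ENNReal.ofReal_le_ofReal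
  -- now real arithmetic: c / (1 - r) ≤ δ
  have hcr : c / (1 - r) = Real.exp (-a * ((m : ℝ) - (Δ : ℝ))) / (Real.exp a + 1) := by
    rw [hc, hp, hr]
    have h1 : 1 - Real.exp (-a) = (Real.exp a - 1) * Real.exp (-a) := by
      rw [sub_mul, ← Real.exp_add]
      simp
    rw [h1]
    have h2 : Real.exp (-a * ((m : ℝ) - (Δ : ℝ) + 1)) =
        Real.exp (-a * ((m : ℝ) - (Δ : ℝ))) * Real.exp (-a) := by
      rw [← Real.exp_add]; ring_nf
    rw [h2, Real.exp_neg a]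
    have hne1 : Real.exp a - 1 ≠ 0 := by linarith
    have hne2 : Real.exp a + 1 ≠ 0 := by linarith
    have hne3 : Real.exp a ≠ 0 := Real.exp_ne_zero a
    field_simp
  rw [hcr]
  rw [div_le_iff₀ (by linarith)]
  -- exp(-a(m-Δ)) ≤ δ (exp a + 1)
  have hpos : 0 < (Real.exp a + 1) * δ := by positivity
  have hlog : -a * ((m : ℝ) - (Δ : ℝ)) ≤ Real.log ((Real.exp a + 1) * δ) := by
    have hlogeq : Real.log (1 / ((Real.exp a + 1) * δ)) = -Real.log ((Real.exp a + 1) * δ) := by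
      rw [one_div, Real.log_inv]
    have h := hm1
    rw [hlogeq] at h
    have h4 : (1 / a) * (-Real.log ((Real.exp a + 1) * δ)) ≤ (m : ℝ) - (Δ : ℝ) := by linarith
    have h5 : -Real.log ((Real.exp a + 1) * δ) ≤ a * ((m : ℝ) - (Δ : ℝ)) := by
      have := mul_le_mul_of_nonneg_left h4 ha0.le
      calc -Real.log ((Real.exp a + 1) * δ)
          = a * ((1 / a) * (-Real.log ((Real.exp a + 1) * δ))) := by field_simp
        _ ≤ a * ((m : ℝ) - (Δ : ℝ)) := this
    linarith
  calc Real.exp (-a * ((m : ℝ) - (Δ : ℝ)))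
      ≤ Real.exp (Real.log ((Real.exp a + 1) * δ)) := Real.exp_le_exp.2 hlog
    _ = (Real.exp a + 1) * δ := Real.exp_log hpos
    _ = δ * (Real.exp a + 1) := by ring
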